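/- Let Γ = fromBlocks A C Cᵀ B be a real symmetric positive definite matrix of size (2n+2m)×(2n+2m), where A is 2n×2n, B is 2m×2m, and C is 2n×2m. Let S be a 2n×2n real invertible matrix with S·A·Sᵀ = A, and set Γ_S = fromBlocks A (S·C) (Cᵀ·Sᵀ) B. Then 0 ≤ 1 - √(det Γ · det Γ_S) / det((Γ + Γ_S)/2) ≤ 1 - det(B - Cᵀ·A⁻¹·C)/det B < 1. -/

import Mathlib

open Matrix

variable {k : Type*} [Fintype k] [DecidableEq k]

lemma aux_det_one_add {Z : Matrix k k ℝ} (hZ : Z.PosSemidef) : 1 ≤ (1 + Z).det := by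
  have hH := hZ.isHermitian
  set U : Matrix k k ℝ := (hH.eigenvectorUnitary : Matrix k k ℝ) with hU
  set D : Matrix k k ℝ := diagonal (RCLike.ofReal ∘ hH.eigenvalues) with hD
  have hUU : U * star U = 1 := (Matrix.mem_unitaryGroup_iff).mp hH.eigenvectorUnitary.2
  have h1 : 1 + Z = U * (1 + D) * star U := by
    rw [Matrix.mul_add, Matrix.mul_one, Matrix.add_mul, hUU]
    congr 1
    rw [hU, hD]
    conv_lhs => rw [hH.spectral_theorem, Unitary.conjStarAlgAut_apply]
  have h2 : U.det * (star U).det = 1 := by rw [← det_mul, hUU, det_one]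
  have hdet : (1 + Z).det = (1 + D).det := by
    rw [h1, det_mul, det_mul]
    calc U.det * (1 + D).det * (star U).det = (1 + D).det * (U.det * (star U).det) := by ring
    _ = (1 + D).det := by rw [h2, mul_one]
  have h3 : (1 : Matrix k k ℝ) + D = diagonal (fun i => 1 + hH.eigenvalues i) := by
    rw [hD, ← diagonal_one, diagonal_add]
    congr!
  rw [hdet, h3, det_diagonal]
  calc (1:ℝ) = ∏ _i : k, 1 := by simp
  _ ≤ ∏ i, (1 + hH.eigenvalues i) := by
      apply Finset.prod_le_prod (fun i _ => zero_le_one)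
      intro i _
      linarith [hZ.eigenvalues_nonneg i]

open scoped MatrixOrder in
lemma aux_det_le_det_add {X Y : Matrix k k ℝ} (hX : X.PosDef) (hY : Y.PosSemidef) :
    X.det ≤ (X + Y).det := by
  set W := CFC.sqrt X with hWdef
  have hW : W.PosSemidef := (CFC.sqrt_nonneg X).posSemidef
  have hWW : W * W = X := CFC.sqrt_mul_sqrt_self X hX.posSemidef.nonneg
  have hdetW : W.det * W.det = X.det := by rw [← det_mul, hWW]
  have hdW : W.det ≠ 0 := by
    intro h
    have := hX.det_pos
    rw [← hdetW, h, mul_zero] at this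
    exact lt_irrefl _ this
  have hWunit : IsUnit W.det := isUnit_iff_ne_zero.mpr hdW
  have hWH : W⁻¹.IsHermitian := hW.isHermitian.inv
  set Z := W⁻¹ * Y * W⁻¹ with hZdef
  have hZ : Z.PosSemidef := by
    have := hY.mul_mul_conjTranspose_same W⁻¹
    rwa [hWH.eq] at this
  have hmid : W * (W⁻¹ * Y * W⁻¹) * W = Y := by
    calc W * (W⁻¹ * Y * W⁻¹) * W = (W * W⁻¹) * Y * (W⁻¹ * W) := by
          simp only [Matrix.mul_assoc]
    _ = Y := by rw [mul_nonsing_inv _ hWunit, nonsing_inv_mul _ hWunit, Matrix.one_mul,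
          Matrix.mul_one]
  have hXY : X + Y = W * (1 + Z) * W := by
    rw [Matrix.mul_add, Matrix.mul_one, Matrix.add_mul, hWW, hZdef, hmid]
  have h1Z : 1 ≤ (1 + Z).det := aux_det_one_add hZ
  calc X.det = X.det * 1 := (mul_one _).symm
  _ ≤ X.det * (1 + Z).det := mul_le_mul_of_nonneg_left h1Z hX.det_pos.le
  _ = (X + Y).det := by rw [hXY, det_mul, det_mul, ← hdetW]; ring

variable {p q : Type*} [Fintype p] [DecidableEq p] [Fintype q] [DecidableEq q]

omit [DecidableEq p] [DecidableEq q] in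
lemma aux_posDef_fromBlocks₁₁ {A : Matrix p p ℝ} {C : Matrix p q ℝ} {B : Matrix q q ℝ}
    (h : (fromBlocks A C Cᵀ B).PosDef) : A.PosDef := by
  have hH : A.IsHermitian := by
    have := h.1
    rw [isHermitian_fromBlocks_iff] at this
    exact this.1
  refine posDef_iff_dotProduct_mulVec.mpr ⟨hH, fun x hx => ?_⟩
  have hne : (x ⊕ᵥ (0 : q → ℝ)) ≠ 0 := by
    intro hc; apply hx; funext i; exact congrFun hc (Sum.inl i)
  have := h.dotProduct_mulVec_pos hne
  simpa [Function.star_sumElim, fromBlocks_mulVec, sumElim_dotProduct_sumElim] using this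

omit [DecidableEq q] in
lemma aux_schur_posDef {A : Matrix p p ℝ} {C : Matrix p q ℝ} {B : Matrix q q ℝ}
    (h : (fromBlocks A C Cᵀ B).PosDef) (hA : A.PosDef) : (B - Cᵀ * A⁻¹ * C).PosDef := by
  haveI : Invertible A := A.invertibleOfIsUnitDet (isUnit_iff_ne_zero.mpr hA.det_pos.ne')
  have h' : (fromBlocks A C Cᴴ B).PosDef := by
    rwa [conjTranspose_eq_transpose_of_trivial]
  have hgoal : (B - Cᴴ * A⁻¹ * C).PosDef := by
    refine posDef_iff_dotProduct_mulVec.mpr ⟨?_, fun x hx => ?_⟩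
    · exact (IsHermitian.fromBlocks₁₁ C B hA.1).mp h'.1
    · have hne : (-((A⁻¹ * C) *ᵥ x) ⊕ᵥ x) ≠ 0 := by
        intro hc; apply hx; funext i; exact congrFun hc (Sum.inr i)
      have := h'.dotProduct_mulVec_pos hne
      rw [dotProduct_mulVec, schur_complement_eq₁₁ C B _ _ hA.1, neg_add_cancel,
        dotProduct_zero, zero_add] at this
      rw [dotProduct_mulVec]; exact this
  rwa [conjTranspose_eq_transpose_of_trivial] at hgoal

theorem stmt_6 (n m : ℕ)
    (A : Matrix (Fin (2 * n)) (Fin (2 * n)) ℝ)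
    (B : Matrix (Fin (2 * m)) (Fin (2 * m)) ℝ)
    (C : Matrix (Fin (2 * n)) (Fin (2 * m)) ℝ)
    (hΓ : (Matrix.fromBlocks A C Cᵀ B).PosDef)
    (S : Matrix (Fin (2 * n)) (Fin (2 * n)) ℝ)
    (hS : IsUnit S) (hSA : S * A * Sᵀ = A) :
    0 ≤ 1 - Real.sqrt ((Matrix.fromBlocks A C Cᵀ B).det *
            (Matrix.fromBlocks A (S * C) (Cᵀ * Sᵀ) B).det) /
          ((1 / 2 : ℝ) • (Matrix.fromBlocks A C Cᵀ B +
              Matrix.fromBlocks A (S * C) (Cᵀ * Sᵀ) B)).det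
    ∧ 1 - Real.sqrt ((Matrix.fromBlocks A C Cᵀ B).det *
            (Matrix.fromBlocks A (S * C) (Cᵀ * Sᵀ) B).det) /
          ((1 / 2 : ℝ) • (Matrix.fromBlocks A C Cᵀ B +
              Matrix.fromBlocks A (S * C) (Cᵀ * Sᵀ) B)).det
        ≤ 1 - (B - Cᵀ * A⁻¹ * C).det / B.det
    ∧ 1 - (B - Cᵀ * A⁻¹ * C).det / B.det < 1 := by
  have hA : A.PosDef := aux_posDef_fromBlocks₁₁ hΓ
  have hSchur : (B - Cᵀ * A⁻¹ * C).PosDef := aux_schur_posDef hΓ hA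
  haveI : Invertible A := A.invertibleOfIsUnitDet (isUnit_iff_ne_zero.mpr hA.det_pos.ne')
  have hSdet : IsUnit S.det := (isUnit_iff_isUnit_det S).mp hS
  have hSTdet : IsUnit Sᵀ.det := by rwa [det_transpose]
  -- S^T A⁻¹ S = A⁻¹
  have hE : Sᵀ * A⁻¹ * S = A⁻¹ := by
    have h1 : A⁻¹ = Sᵀ⁻¹ * (A⁻¹ * S⁻¹) := by
      conv_lhs => rw [← hSA]
      rw [Matrix.mul_inv_rev, Matrix.mul_inv_rev]
    calc Sᵀ * A⁻¹ * S = Sᵀ * (Sᵀ⁻¹ * (A⁻¹ * S⁻¹)) * S := by rw [← h1]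
    _ = (Sᵀ * Sᵀ⁻¹) * A⁻¹ * (S⁻¹ * S) := by simp only [Matrix.mul_assoc]
    _ = A⁻¹ := by
        rw [mul_nonsing_inv _ hSTdet, nonsing_inv_mul _ hSdet, Matrix.one_mul, Matrix.mul_one]
  have h4 : Cᵀ * Sᵀ * A⁻¹ * (S * C) = Cᵀ * A⁻¹ * C := by
    calc Cᵀ * Sᵀ * A⁻¹ * (S * C) = Cᵀ * ((Sᵀ * A⁻¹ * S) * C) := by simp only [Matrix.mul_assoc]
    _ = Cᵀ * A⁻¹ * C := by rw [hE, Matrix.mul_assoc]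
  set C₁ : Matrix (Fin (2*n)) (Fin (2*m)) ℝ := (1/2 : ℝ) • (C + S * C) with hC₁
  set D : Matrix (Fin (2*n)) (Fin (2*m)) ℝ := (1/2 : ℝ) • (C - S * C) with hD
  have key : C₁ᵀ * A⁻¹ * C₁ + Dᵀ * A⁻¹ * D = Cᵀ * A⁻¹ * C := by
    rw [hC₁, hD]
    simp only [transpose_smul, transpose_add, transpose_sub, transpose_mul,
      Matrix.smul_mul, Matrix.mul_smul, Matrix.add_mul, Matrix.mul_add,
      Matrix.sub_mul, Matrix.mul_sub, smul_add, smul_sub, smul_smul, h4]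
    module
  -- the midpoint matrix
  have hM : (1 / 2 : ℝ) • (Matrix.fromBlocks A C Cᵀ B +
      Matrix.fromBlocks A (S * C) (Cᵀ * Sᵀ) B) = Matrix.fromBlocks A C₁ C₁ᵀ B := by
    have hMA : (1/2:ℝ) • (A + A) = A := by module
    have hMB : (1/2:ℝ) • (B + B) = B := by module
    have hMC : (1/2:ℝ) • (Cᵀ + Cᵀ * Sᵀ) = C₁ᵀ := by
      rw [hC₁, transpose_smul, transpose_add, transpose_mul]
    rw [fromBlocks_add, fromBlocks_smul, hMA, hMB, hMC, ← hC₁]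
  -- determinants
  have hinv : (⅟A : Matrix (Fin (2*n)) (Fin (2*n)) ℝ) = A⁻¹ := invOf_eq_nonsing_inv A
  have detΓ : (Matrix.fromBlocks A C Cᵀ B).det = A.det * (B - Cᵀ * A⁻¹ * C).det := by
    rw [det_fromBlocks₁₁, hinv]
  have detΓS : (Matrix.fromBlocks A (S * C) (Cᵀ * Sᵀ) B).det
      = A.det * (B - Cᵀ * A⁻¹ * C).det := by
    rw [det_fromBlocks₁₁, hinv, h4]
  have detM : ((1 / 2 : ℝ) • (Matrix.fromBlocks A C Cᵀ B +
      Matrix.fromBlocks A (S * C) (Cᵀ * Sᵀ) B)).det = A.det * (B - C₁ᵀ * A⁻¹ * C₁).det := by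
    rw [hM, det_fromBlocks₁₁, hinv]
  -- positivity and comparisons
  have hPSD : ∀ (F : Matrix (Fin (2*n)) (Fin (2*m)) ℝ), (Fᵀ * A⁻¹ * F).PosSemidef := by
    intro F
    have := hA.inv.posSemidef.conjTranspose_mul_mul_same F
    rwa [conjTranspose_eq_transpose_of_trivial] at this
  have hsplit : B - C₁ᵀ * A⁻¹ * C₁ = (B - Cᵀ * A⁻¹ * C) + Dᵀ * A⁻¹ * D := by
    rw [← key]; abel
  have h_d1 : (B - Cᵀ * A⁻¹ * C).det ≤ (B - C₁ᵀ * A⁻¹ * C₁).det := by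
    rw [hsplit]; exact aux_det_le_det_add hSchur (hPSD D)
  have hpd1 : (B - C₁ᵀ * A⁻¹ * C₁).PosDef := by
    rw [hsplit]; exact hSchur.add_posSemidef (hPSD D)
  have h_dB : (B - C₁ᵀ * A⁻¹ * C₁).det ≤ B.det := by
    have hB : B = (B - C₁ᵀ * A⁻¹ * C₁) + C₁ᵀ * A⁻¹ * C₁ := by abel
    calc (B - C₁ᵀ * A⁻¹ * C₁).det ≤ ((B - C₁ᵀ * A⁻¹ * C₁) + C₁ᵀ * A⁻¹ * C₁).det :=
          aux_det_le_det_add hpd1 (hPSD C₁)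
    _ = B.det := by rw [← hB]
  have hd0 : 0 < (B - Cᵀ * A⁻¹ * C).det := hSchur.det_pos
  have hd1 : 0 < (B - C₁ᵀ * A⁻¹ * C₁).det := hpd1.det_pos
  have hdB : 0 < B.det := lt_of_lt_of_le hd1 h_dB
  have hdA : 0 < A.det := hA.det_pos
  -- simplify the sqrt
  have hsqrt : Real.sqrt ((Matrix.fromBlocks A C Cᵀ B).det *
      (Matrix.fromBlocks A (S * C) (Cᵀ * Sᵀ) B).det) = A.det * (B - Cᵀ * A⁻¹ * C).det := by
    rw [detΓ, detΓS]
    exact Real.sqrt_mul_self (by positivity)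
  rw [hsqrt, detM]
  have hq : A.det * (B - Cᵀ * A⁻¹ * C).det / (A.det * (B - C₁ᵀ * A⁻¹ * C₁).det)
      = (B - Cᵀ * A⁻¹ * C).det / (B - C₁ᵀ * A⁻¹ * C₁).det :=
    mul_div_mul_left _ _ hdA.ne'
  rw [hq]
  refine ⟨?_, ?_, ?_⟩
  · rw [sub_nonneg]
    exact (div_le_one hd1).mpr h_d1
  · have : (B - Cᵀ * A⁻¹ * C).det / B.det ≤
        (B - Cᵀ * A⁻¹ * C).det / (B - C₁ᵀ * A⁻¹ * C₁).det := by
      gcongr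
    linarith
  · have : 0 < (B - Cᵀ * A⁻¹ * C).det / B.det := div_pos hd0 hdB
    linarith
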